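/- Let μ ∈ ℂ with |μ| = 1. Then for every A ∈ ℂ^{n×n} there exists S ∈ ℂ^{n×n} such that A + μ(S*Δ_n + Δ_n S) is a diagonal matrix. -/

import Mathlib

open Matrix

/-- The `n×n` upper-triangular Jordan block with eigenvalue `l`. -/
noncomputable def Jmat (n : ℕ) (l : ℂ) : Matrix (Fin n) (Fin n) ℂ :=
  Matrix.of fun i j =>
    if (i : ℕ) = (j : ℕ) then l
    else if (j : ℕ) = (i : ℕ) + 1 then 1 else 0

/-- The symmetric matrix `Δ_n`: (1-based) entry `(j,k)` is `1` if `j+k = n+1`,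
`i` if `j+k = n+2`, and `0` otherwise. -/
noncomputable def Dmat (n : ℕ) : Matrix (Fin n) (Fin n) ℂ :=
  Matrix.of fun i j =>
    if (i : ℕ) + (j : ℕ) + 1 = n then 1
    else if (i : ℕ) + (j : ℕ) = n then Complex.I
    else 0

/-- The `2m×2m` block matrix `H_m(l) = [[0, I],[J_m(l), 0]]`. -/
noncomputable def Hmat (m : ℕ) (l : ℂ) : Matrix (Fin m ⊕ Fin m) (Fin m ⊕ Fin m) ℂ :=
  Matrix.fromBlocks 0 1 (Jmat m l) 0

/-- `T(A) = {CᴴA + AC}`, the tangent space to the *congruence class of `A`. -/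
def Tset {n : Type*} [Fintype n] (A : Matrix n n ℂ) : Set (Matrix n n ℂ) :=
  {X | ∃ C : Matrix n n ℂ, X = Cᴴ * A + A * C}

/-- `T(M,N) = {(SᴴM + NR, RᴴN + MS)}`. -/
def Tpair {p q : Type*} [Fintype p] [Fintype q]
    (M : Matrix p p ℂ) (N : Matrix q q ℂ) :
    Set (Matrix q p ℂ × Matrix p q ℂ) :=
  {X | ∃ (S : Matrix p q ℂ) (R : Matrix q p ℂ),
      X = (Sᴴ * M + N * R, Rᴴ * N + M * S)}

namespace Stmt7Aux

lemma Dmat_symm {n : ℕ} (a b : Fin n) : Dmat n a b = Dmat n b a := by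
  simp only [Dmat, Matrix.of_apply, Nat.add_comm (a : ℕ) (b : ℕ)]

lemma sumD' {n : ℕ} (p q r : Fin n) (hq : (p : ℕ) + (q : ℕ) + 1 = n)
    (hr : (p : ℕ) + (r : ℕ) = n) (g : Fin n → ℂ) :
    ∑ b, Dmat n p b * g b = g q + Complex.I * g r := by
  have hp := p.isLt
  have hqr : q ≠ r := by
    intro hc; apply absurd (congrArg Fin.val hc); omega
  have hkey : ∀ b : Fin n, Dmat n p b * g b =
      (if b = q then g q else 0) + (if b = r then Complex.I * g r else 0) := by
    intro b
    have hb := b.isLt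
    by_cases h1 : (p : ℕ) + (b : ℕ) + 1 = n
    · have hbq : b = q := by apply Fin.ext; omega
      rw [if_pos hbq, if_neg (hbq ▸ hqr), hbq]
      simp [Dmat, show (p : ℕ) + (q : ℕ) + 1 = n from hq]
    · by_cases h2 : (p : ℕ) + (b : ℕ) = n
      · have hbr : b = r := by apply Fin.ext; omega
        have hbq : b ≠ q := by intro hc; apply absurd (congrArg Fin.val hc); omega
        rw [if_neg hbq, if_pos hbr, hbr]
        simp [Dmat, show ¬ ((p : ℕ) + (r : ℕ) + 1 = n) from by omega,
          show (p : ℕ) + (r : ℕ) = n from hr]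
      · have hbq : b ≠ q := by intro hc; apply absurd (congrArg Fin.val hc); omega
        have hbr : b ≠ r := by intro hc; apply absurd (congrArg Fin.val hc); omega
        rw [if_neg hbq, if_neg hbr]
        simp [Dmat, h1, h2]
  rw [Finset.sum_congr rfl fun b _ => hkey b, Finset.sum_add_distrib,
    Finset.sum_ite_eq' Finset.univ q (fun _ => g q),
    Finset.sum_ite_eq' Finset.univ r (fun _ => Complex.I * g r)]
  simp

lemma sumD0 {n : ℕ} (p q : Fin n) (hq : (p : ℕ) + (q : ℕ) + 1 = n)
    (hp : (p : ℕ) = 0) (g : Fin n → ℂ) :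
    ∑ b, Dmat n p b * g b = g q := by
  have hkey : ∀ b : Fin n, Dmat n p b * g b = (if b = q then g q else 0) := by
    intro b
    have hb := b.isLt
    by_cases h1 : (p : ℕ) + (b : ℕ) + 1 = n
    · have hbq : b = q := by apply Fin.ext; omega
      rw [if_pos hbq, hbq]
      simp [Dmat, show (p : ℕ) + (q : ℕ) + 1 = n from hq]
    · have h2 : ¬ ((p : ℕ) + (b : ℕ) = n) := by omega
      have hbq : b ≠ q := by intro hc; apply absurd (congrArg Fin.val hc); omega
      rw [if_neg hbq]
      simp [Dmat, h1, h2]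
  rw [Finset.sum_congr rfl fun b _ => hkey b,
    Finset.sum_ite_eq' Finset.univ q (fun _ => g q)]
  simp

lemma keyX {n : ℕ} (x : Fin n → Fin n → ℂ)
    (hd : ∀ j, x j j = 0)
    (hrel : ∀ (a m : Fin n) (h : (m : ℕ) + 1 < n),
      (x m a + (starRingEnd ℂ) (x a m)) +
        Complex.I * (x ⟨(m : ℕ) + 1, h⟩ a - (starRingEnd ℂ) (x a ⟨(m : ℕ) + 1, h⟩)) = 0)
    (hlast : ∀ (a m : Fin n), (m : ℕ) + 1 = n →
      x m a + (starRingEnd ℂ) (x a m) = 0) :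
    ∀ a b, x a b = 0 := by
  set w : Fin n → Fin n → ℂ := fun a m => x m a + (starRingEnd ℂ) (x a m) with hw
  set v : Fin n → Fin n → ℂ := fun a m => x m a - (starRingEnd ℂ) (x a m) with hv
  have hv1 : ∀ (a m : Fin n) (h : (m : ℕ) + 1 < n),
      v a ⟨(m : ℕ) + 1, h⟩ = Complex.I * w a m := by
    intro a m h
    have h0 := hrel a m h
    simp only [hw, hv]
    linear_combination (-Complex.I) * h0 +
      (x (⟨(m : ℕ) + 1, h⟩ : Fin n) a - (starRingEnd ℂ) (x a ⟨(m : ℕ) + 1, h⟩)) * Complex.I_sq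
  have hwdiag : ∀ a : Fin n, w a a = 0 := by
    intro a; simp [hw, hd]
  have hvdiag : ∀ a : Fin n, v a a = 0 := by
    intro a; simp [hv, hd]
  have hvsym : ∀ a m : Fin n, v a m = -(starRingEnd ℂ) (v m a) := by
    intro a m; simp only [hv, map_sub]; ring_nf; rw [Complex.conj_conj]; ring
  have hwsym : ∀ a m : Fin n, w a m = (starRingEnd ℂ) (w m a) := by
    intro a m; simp only [hw, map_add]; rw [Complex.conj_conj]; ring
  have hstep : ∀ (a m : Fin n) (h1 : (a : ℕ) + 1 < n) (h2 : (m : ℕ) + 1 < n),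
      v a ⟨(m : ℕ) + 1, h2⟩ = v ⟨(a : ℕ) + 1, h1⟩ m := by
    intro a m h1 h2
    rw [hv1 a m h2, hwsym a m, hvsym ⟨(a : ℕ) + 1, h1⟩ m, hv1 m a h1,
      _root_.map_mul, Complex.conj_I]
    ring
  have hvz : ∀ (d : ℕ) (a m : Fin n), (m : ℕ) = (a : ℕ) + d → v a m = 0 := by
    intro d
    induction d using Nat.strong_induction_on with
    | _ d ih =>
      intro a m hm
      match d with
      | 0 =>
        have : m = a := Fin.ext (by omega)
        rw [this, hvdiag]
      | 1 =>
        have hlt : (a : ℕ) + 1 < n := by have := m.isLt; omega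
        have : m = ⟨(a : ℕ) + 1, hlt⟩ := Fin.ext (by simp only [Fin.val_mk]; omega)
        rw [this, hv1 a a hlt, hwdiag, mul_zero]
      | (e + 2) =>
        have hmlt := m.isLt
        have h1 : (a : ℕ) + 1 < n := by omega
        have hm'lt : (m : ℕ) - 1 < n := by omega
        set m' : Fin n := ⟨(m : ℕ) - 1, hm'lt⟩ with hm'def
        have h2 : (m' : ℕ) + 1 < n := by simp only [hm'def]; omega
        have hmeq : m = ⟨(m' : ℕ) + 1, h2⟩ := Fin.ext (by simp only [hm'def]; omega)
        rw [hmeq, hstep a m' h1 h2]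
        exact ih e (by omega) _ _ (by simp only [hm'def]; omega)
  have hvall : ∀ a m : Fin n, v a m = 0 := by
    intro a m
    rcases le_or_gt (a : ℕ) (m : ℕ) with hle | hlt
    · exact hvz ((m : ℕ) - (a : ℕ)) a m (by omega)
    · rw [hvsym, hvz ((a : ℕ) - (m : ℕ)) m a (by omega), map_zero, neg_zero]
  have hwall : ∀ a m : Fin n, w a m = 0 := by
    intro a m
    by_cases h : (m : ℕ) + 1 < n
    · have h' := hv1 a m h
      rw [hvall] at h'
      rcases mul_eq_zero.mp h'.symm with h'' | h''
      · exact absurd h'' Complex.I_ne_zero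
      · exact h''
    · exact hlast a m (by have := m.isLt; omega)
  intro a b
  have h1 := hwall b a
  have h2 := hvall b a
  simp only [hw, hv] at h1 h2
  linear_combination (h1 + h2) / 2

end Stmt7Aux

open Stmt7Aux in
/-- For `|μ| = 1`: every `A ∈ ℂ^{n×n}` can be made diagonal by adding
`μ(SᴴΔ_n + Δ_n S)` for some `S`. -/
theorem stmt7 (n : ℕ) (μ : ℂ) (hμ : ‖μ‖ = 1)
    (A : Matrix (Fin n) (Fin n) ℂ) :
    ∃ S : Matrix (Fin n) (Fin n) ℂ,
      (A + μ • (Sᴴ * Dmat n + Dmat n * S)).IsDiag := by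
  classical
  by_contra hno
  push_neg at hno
  have hμ0 : μ ≠ 0 := by
    intro h; rw [h] at hμ; simp at hμ
  let U : Submodule ℝ (Matrix (Fin n) (Fin n) ℂ) :=
    { carrier := {Y | ∃ S D : Matrix (Fin n) (Fin n) ℂ,
        D.IsDiag ∧ Y = Sᴴ * Dmat n + Dmat n * S + D}
      add_mem' := by
        rintro Y₁ Y₂ ⟨S₁, D₁, h₁, rfl⟩ ⟨S₂, D₂, h₂, rfl⟩
        refine ⟨S₁ + S₂, D₁ + D₂, h₁.add h₂, ?_⟩
        rw [conjTranspose_add, add_mul, mul_add]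
        abel
      zero_mem' := ⟨0, 0, Matrix.isDiag_zero, by simp⟩
      smul_mem' := by
        rintro r Y ⟨S, D, hD, rfl⟩
        refine ⟨r • S, r • D, hD.smul r, ?_⟩
        rw [conjTranspose_smul, star_trivial, Matrix.smul_mul, Matrix.mul_smul,
          smul_add, smul_add] }
  have hmemU : ∀ Y : Matrix (Fin n) (Fin n) ℂ, Y ∈ U ↔
      ∃ S D : Matrix (Fin n) (Fin n) ℂ,
        D.IsDiag ∧ Y = Sᴴ * Dmat n + Dmat n * S + D := fun Y => Iff.rfl
  have hnmem : (-(μ⁻¹) • A) ∉ U := by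
    intro hmem
    obtain ⟨S, D, hD, hEq⟩ := (hmemU _).mp hmem
    apply hno S
    have h1 : Sᴴ * Dmat n + Dmat n * S = -(μ⁻¹) • A - D := by
      rw [hEq]; abel
    have h2 : A + μ • (Sᴴ * Dmat n + Dmat n * S) = -(μ • D) := by
      rw [h1, smul_sub, smul_smul, mul_neg, mul_inv_cancel₀ hμ0]
      simp only [neg_smul, one_smul]
      abel
    rw [h2]
    exact (hD.smul μ).neg
  obtain ⟨f, hfx, hfmap⟩ := Submodule.exists_dual_map_eq_bot_of_notMem hnmem inferInstance
  have hf0 : ∀ Y ∈ U, f Y = 0 := by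
    intro Y hY
    have : f Y ∈ U.map f := Submodule.mem_map_of_mem hY
    rwa [hfmap, Submodule.mem_bot] at this
  have hre_helper : ∀ (z : ℂ) (r s : ℝ),
      (z * ((r : ℂ) - Complex.I * (s : ℂ))).re = z.re * r + z.im * s := by
    intro z r s
    simp only [Complex.mul_re, Complex.sub_re, Complex.ofReal_re, Complex.mul_im,
      Complex.sub_im, Complex.ofReal_im, Complex.I_re, Complex.I_im]
    ring
  have hxex : ∃ x : Fin n → Fin n → ℂ, ∀ (a b : Fin n) (z : ℂ),
      f (Matrix.single a b z) = (z * x a b).re := by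
    refine ⟨fun a b => ((f (Matrix.single a b 1) : ℝ) : ℂ)
      - Complex.I * ((f (Matrix.single a b Complex.I) : ℝ) : ℂ), ?_⟩
    intro a b z
    have hz : Matrix.single a b z
        = z.re • Matrix.single a b (1 : ℂ) + z.im • Matrix.single a b Complex.I := by
      ext i j
      simp only [Matrix.add_apply, Matrix.smul_apply, Matrix.single, Matrix.of_apply]
      split
      · simp [Complex.real_smul, Complex.re_add_im]
      · simp
    rw [hz, map_add, LinearMap.map_smul, LinearMap.map_smul]
    rw [hre_helper]
    simp [smul_eq_mul]
  obtain ⟨x, hrep1⟩ := hxex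
  have hrep : ∀ C : Matrix (Fin n) (Fin n) ℂ,
      f C = (∑ a, ∑ b, C a b * x a b).re := by
    intro C
    conv_lhs => rw [matrix_eq_sum_single C]
    rw [map_sum]
    simp_rw [map_sum, hrep1, Complex.re_sum]
  have hdiagx : ∀ j, x j j = 0 := by
    intro j
    have hz : ∀ z : ℂ, f (Matrix.single j j z) = 0 := by
      intro z
      apply hf0
      rw [hmemU]
      refine ⟨0, Matrix.single j j z, ?_, by simp⟩
      intro a b hab
      simp only [Matrix.single, Matrix.of_apply, ite_eq_right_iff, and_imp]
      rintro rfl rfl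
      exact absurd rfl hab
    have h1 := hz 1; rw [hrep1] at h1
    have h2 := hz Complex.I; rw [hrep1] at h2
    simp only [one_mul] at h1
    simp only [Complex.mul_re, Complex.I_re, Complex.I_im, zero_mul, one_mul,
      zero_sub, neg_eq_zero] at h2
    apply Complex.ext
    · simpa using h1
    · simpa using h2
  set X : Matrix (Fin n) (Fin n) ℂ := Matrix.of x with hXdef
  set G : Matrix (Fin n) (Fin n) ℂ := Xᵀ * Dmat n + Xᵀᴴ * (Dmat n)ᴴ with hGdef
  have htr : ∀ C : Matrix (Fin n) (Fin n) ℂ, f C = (Matrix.trace (C * Xᵀ)).re := by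
    intro C
    rw [hrep]
    congr 1
  have hGrow : ∀ S : Matrix (Fin n) (Fin n) ℂ, (Matrix.trace (S * G)).re = 0 := by
    intro S
    have h0 : f (Sᴴ * Dmat n + Dmat n * S) = 0 := by
      apply hf0
      rw [hmemU]
      exact ⟨S, 0, Matrix.isDiag_zero, by simp⟩
    rw [htr, add_mul, Matrix.trace_add, Complex.add_re] at h0
    have e1 : Matrix.trace (Dmat n * S * Xᵀ) = Matrix.trace (S * Xᵀ * Dmat n) :=
      (Matrix.trace_mul_cycle S Xᵀ (Dmat n)).symm
    have e3 : (S * Xᵀᴴ * (Dmat n)ᴴ)ᴴ = Dmat n * Xᵀ * Sᴴ := by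
      rw [Matrix.conjTranspose_mul, Matrix.conjTranspose_mul,
        Matrix.conjTranspose_conjTranspose, Matrix.conjTranspose_conjTranspose,
        ← Matrix.mul_assoc]
    have e2 : Matrix.trace (Sᴴ * Dmat n * Xᵀ)
        = (starRingEnd ℂ) (Matrix.trace (S * Xᵀᴴ * (Dmat n)ᴴ)) := by
      calc Matrix.trace (Sᴴ * Dmat n * Xᵀ)
          = Matrix.trace (Xᵀ * Sᴴ * Dmat n) := Matrix.trace_mul_cycle _ _ _
        _ = Matrix.trace (Dmat n * Xᵀ * Sᴴ) := Matrix.trace_mul_cycle _ _ _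
        _ = Matrix.trace ((S * Xᵀᴴ * (Dmat n)ᴴ)ᴴ) := by rw [e3]
        _ = (starRingEnd ℂ) (Matrix.trace (S * Xᵀᴴ * (Dmat n)ᴴ)) :=
            Matrix.trace_conjTranspose _
    rw [e1, e2, Complex.conj_re] at h0
    rw [hGdef, Matrix.mul_add, Matrix.trace_add, Complex.add_re,
      ← Matrix.mul_assoc, ← Matrix.mul_assoc]
    linarith [h0]
  have hGzero : ∀ a b : Fin n, G a b = 0 := by
    intro a b
    have htrG : ∀ z : ℂ, Matrix.trace (Matrix.single b a z * G) = z * G a b := by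
      intro z
      simp only [Matrix.trace, Matrix.diag_apply]
      rw [Fintype.sum_eq_single b]
      · rw [Matrix.single_mul_apply_same]
      · intro j hj
        simp [hj]
    have h1 := hGrow (Matrix.single b a 1)
    rw [htrG, one_mul] at h1
    have h2 := hGrow (Matrix.single b a Complex.I)
    rw [htrG] at h2
    simp only [Complex.mul_re, Complex.I_re, Complex.I_im, zero_mul, one_mul,
      zero_sub, neg_eq_zero] at h2
    apply Complex.ext
    · simpa using h1
    · simpa using h2
  have hrel0 : ∀ a b : Fin n,
      (∑ l, Dmat n b l * x l a) + (starRingEnd ℂ) (∑ l, Dmat n b l * x a l) = 0 := by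
    intro a b
    have h := hGzero a b
    rw [hGdef, Matrix.add_apply] at h
    have e1 : (Xᵀ * Dmat n) a b = ∑ l, Dmat n b l * x l a := by
      rw [Matrix.mul_apply]
      refine Finset.sum_congr rfl fun l _ => ?_
      rw [Matrix.transpose_apply, Dmat_symm b l, mul_comm]
      rfl
    have e2 : (Xᵀᴴ * (Dmat n)ᴴ) a b = (starRingEnd ℂ) (∑ l, Dmat n b l * x a l) := by
      rw [Matrix.mul_apply, map_sum]
      refine Finset.sum_congr rfl fun l _ => ?_
      rw [Matrix.conjTranspose_apply, Matrix.conjTranspose_apply, Matrix.transpose_apply,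
        _root_.map_mul, mul_comm]
      rfl
    rw [e1, e2] at h
    exact h
  have hx0 : ∀ a b, x a b = 0 := by
    apply keyX x hdiagx
    · intro a m hm1
      have hnlt := m.isLt
      have h := hrel0 a ⟨n - 1 - (m : ℕ), by omega⟩
      rw [sumD' _ m ⟨(m : ℕ) + 1, hm1⟩ (by simp; omega) (by simp; omega),
        sumD' _ m ⟨(m : ℕ) + 1, hm1⟩ (by simp; omega) (by simp; omega)] at h
      rw [map_add, _root_.map_mul, Complex.conj_I] at h
      linear_combination h
    · intro a m hm1
      have hnlt := m.isLt
      have h := hrel0 a ⟨n - 1 - (m : ℕ), by omega⟩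
      rw [sumD0 _ m (by simp; omega) (by simp; omega),
        sumD0 _ m (by simp; omega) (by simp; omega)] at h
      exact h
  apply hfx
  rw [hrep]
  simp only [hx0, mul_zero]
  simp
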